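/- For every 3×3 real positive definite matrix Σ and every m×3 real matrix B (m ≥ 1), there exist two invertible 3×3 real matrices A₀ and A₀′, each satisfying the zero restrictions (·)₂₁ = (·)₃₁ = 0 and ((·)⁻¹ᵀ)₁₂ = 0, with (A₀A₀ᵀ)⁻¹ = (A₀′A₀′ᵀ)⁻¹ = Σ, such that A₀′ ≠ A₀D for every 3×3 diagonal matrix D with diagonal entries in {1, −1}. Consequently, setting A₊ = BA₀ and A₊′ = BA₀′, the two structural parameter points (A₀, A₊) and (A₀′, A₊′) satisfy all the imposed restrictions, map to the same reduced-form parameters (B, Σ), and are not related by any sign normalization; hence the trivariate SVAR with these restrictions is not globally identified, even though the restriction counts q₁ = 2, q₂ = 1, q₃ = 0 satisfy the rank condition qⱼ = n − j of Theorem 7 of Rubio-Ramírez, Waggoner, and Zha (2010). -/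

import Mathlib

open Matrix

private lemma posDef_submatrix_equiv {n m : Type*} [Fintype n] [Fintype m]
    {M : Matrix n n ℝ} (hM : M.PosDef) (e : m ≃ n) : (M.submatrix e e).PosDef := by
  rw [posDef_iff_dotProduct_mulVec]
  constructor
  · have h := hM.1
    unfold Matrix.IsHermitian at h ⊢
    rw [conjTranspose_submatrix, h]
  · intro x hx
    have hy : (x ∘ e.symm) ≠ 0 := by
      intro h
      apply hx
      ext i
      have := congrFun h (e i)
      simpa using this
    have hpos := hM.dotProduct_mulVec_pos hy
    rw [submatrix_mulVec_equiv]
    convert hpos using 1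
    refine Fintype.sum_equiv e _ _ (fun i => ?_)
    simp [Function.comp]

private lemma posDef_conj_mul {n : Type*} [Fintype n] [DecidableEq n]
    {A B : Matrix n n ℝ} (hA : A.PosDef) (hB : IsUnit B.det) :
    (Bᴴ * A * B).PosDef := by
  rw [posDef_iff_dotProduct_mulVec]
  constructor
  · exact isHermitian_conjTranspose_mul_mul B hA.1
  · intro x hx
    have hBx : B *ᵥ x ≠ 0 := by
      intro h
      apply hx
      have h2 := congrArg (fun v => B⁻¹ *ᵥ v) h
      simpa [Matrix.mulVec_mulVec, Matrix.nonsing_inv_mul _ hB] using h2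
    simpa only [star_mulVec, dotProduct_mulVec, vecMul_vecMul] using hA.dotProduct_mulVec_pos hBx

private def rev3 : Fin 3 ≃ Fin 3 := ⟨![2,1,0], ![2,1,0], by decide, by decide⟩


private lemma chol_upper {n : Type*} [Fintype n] [LinearOrder n] [WellFoundedLT n]
    [LocallyFiniteOrderBot n] {S : Matrix n n ℝ} (hS : S.PosDef) :
    ∃ T : Matrix n n ℝ,
      T.BlockTriangular (OrderDual.toDual : n → nᵒᵈ) ∧ T * Tᵀ = S := by
  haveI := LDL.invertibleLowerInv hS
  have hLdet : IsUnit (LDL.lowerInv hS).det := isUnit_det_of_invertible _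
  have hdiagPD : (LDL.diag hS).PosDef := by
    rw [LDL.diag_eq_lowerInv_conj hS]
    have h3 : LDL.lowerInv hS = ((LDL.lowerInv hS)ᴴ)ᴴ := (conjTranspose_conjTranspose _).symm
    rw [h3]
    refine posDef_conj_mul hS ?_
    rw [det_conjTranspose]
    exact hLdet.star
  have hDpos : ∀ i, 0 < LDL.diagEntries hS i := by
    intro i
    have hne : (Pi.single i 1 : n → ℝ) ≠ 0 := by
      intro hc
      have := congrFun hc i
      simp at this
    have h := hdiagPD.dotProduct_mulVec_pos hne
    simpa [LDL.diag, mulVec_single, dotProduct_diagonal'] using h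
  set s : n → ℝ := fun i => Real.sqrt (LDL.diagEntries hS i) with hsdef
  refine ⟨LDL.lower hS * diagonal s, ?_, ?_⟩
  · have h1 : (LDL.lowerInv hS).BlockTriangular (OrderDual.toDual : n → nᵒᵈ) :=
      fun i j hij => LDL.lowerInv_triangular hS hij
    exact (blockTriangular_inv_of_blockTriangular h1).mul (blockTriangular_diagonal s)
  · have hss : diagonal s * (diagonal s)ᵀ = LDL.diag hS := by
      rw [diagonal_transpose, diagonal_mul_diagonal,
        show (fun i => s i * s i) = LDL.diagEntries hS from
          funext fun i => Real.mul_self_sqrt (hDpos i).le]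
      rfl
    calc LDL.lower hS * diagonal s * (LDL.lower hS * diagonal s)ᵀ
        = LDL.lower hS * (diagonal s * (diagonal s)ᵀ) * (LDL.lower hS)ᵀ := by
          rw [transpose_mul, Matrix.mul_assoc, Matrix.mul_assoc, Matrix.mul_assoc]
      _ = LDL.lower hS * LDL.diag hS * (LDL.lower hS)ᴴ := by
          rw [hss, conjTranspose_eq_transpose_of_trivial, Matrix.mul_assoc]
      _ = S := LDL.lower_conj_diag hS

set_option maxHeartbeats 1000000

theorem not_globally_identified
    (Sig : Matrix (Fin 3) (Fin 3) ℝ) (hSig : Sig.PosDef)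
    (m : ℕ) (hm : 1 ≤ m) (B : Matrix (Fin m) (Fin 3) ℝ) :
    ∃ A₀ A₀' : Matrix (Fin 3) (Fin 3) ℝ,
      IsUnit A₀.det ∧ IsUnit A₀'.det ∧
      A₀ 1 0 = 0 ∧ A₀ 2 0 = 0 ∧ (A₀⁻¹)ᵀ 0 1 = 0 ∧
      A₀' 1 0 = 0 ∧ A₀' 2 0 = 0 ∧ (A₀'⁻¹)ᵀ 0 1 = 0 ∧
      (A₀ * A₀ᵀ)⁻¹ = Sig ∧ (A₀' * A₀'ᵀ)⁻¹ = Sig ∧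
      (∀ d : Fin 3 → ℝ, (∀ i, d i = 1 ∨ d i = -1) → A₀' ≠ A₀ * Matrix.diagonal d) ∧
      (B * A₀) * A₀⁻¹ = B ∧ (B * A₀') * A₀'⁻¹ = B := by
  have hM : (Sig⁻¹).PosDef := hSig.inv
  set M : Matrix (Fin 3) (Fin 3) ℝ := Sig⁻¹ with hMdef
  have hM' : (M.submatrix rev3 rev3).PosDef := posDef_submatrix_equiv hM rev3
  obtain ⟨T, hTtri, hTM⟩ := @chol_upper (Fin 3) _ _ (Finite.to_wellFoundedLT) _ _ hM'
  set A₁ : Matrix (Fin 3) (Fin 3) ℝ := T.submatrix rev3 rev3 with hA₁def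
  have hrev : (rev3 : Fin 3 → Fin 3) ∘ rev3 = id := by
    ext i
    fin_cases i <;> rfl
  have hA₁fact : A₁ * A₁ᵀ = M := by
    rw [hA₁def, transpose_submatrix, submatrix_mul_equiv, hTM, submatrix_submatrix, hrev,
      submatrix_id_id]
  have hMdetpos : 0 < M.det := hM.det_pos
  have hA₁det : IsUnit A₁.det := by
    rw [isUnit_iff_ne_zero]
    intro h
    have hd : A₁.det * A₁.det = M.det := by
      rw [← hA₁fact, det_mul, det_transpose]
    rw [h, mul_zero] at hd
    exact hMdetpos.ne' hd.symm
  have hTdet : IsUnit T.det := by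
    have h : A₁.det = T.det := det_submatrix_equiv_self rev3 T
    rwa [h] at hA₁det
  haveI : Invertible T := T.invertibleOfIsUnitDet hTdet
  have hTinvtri : (T⁻¹).BlockTriangular (OrderDual.toDual : Fin 3 → (Fin 3)ᵒᵈ) :=
    blockTriangular_inv_of_blockTriangular hTtri
  -- entries
  have hrev0 : rev3 0 = 2 := rfl
  have hrev1 : rev3 1 = 1 := rfl
  have hrev2 : rev3 2 = 0 := rfl
  have hA₁10 : A₁ 1 0 = 0 := by
    show T (rev3 1) (rev3 0) = 0
    rw [hrev1, hrev0]
    exact hTtri (by decide)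
  have hA₁20 : A₁ 2 0 = 0 := by
    show T (rev3 2) (rev3 0) = 0
    rw [hrev2, hrev0]
    exact hTtri (by decide)
  have hA₁inv : A₁⁻¹ = T⁻¹.submatrix rev3 rev3 := inv_submatrix_equiv T rev3 rev3
  have hA₁inv10 : A₁⁻¹ 1 0 = 0 := by
    rw [hA₁inv]
    show T⁻¹ (rev3 1) (rev3 0) = 0
    rw [hrev1, hrev0]
    exact hTinvtri (by decide)
  have hA₁inv20 : A₁⁻¹ 2 0 = 0 := by
    rw [hA₁inv]
    show T⁻¹ (rev3 2) (rev3 0) = 0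
    rw [hrev2, hrev0]
    exact hTinvtri (by decide)
  -- the rotation
  set Q : Matrix (Fin 3) (Fin 3) ℝ := !![1,0,0;0,0,-1;0,1,0] with hQdef
  have hQt : Qᵀ = (!![1,0,0;0,0,1;0,-1,0] : Matrix (Fin 3) (Fin 3) ℝ) := by
    rw [hQdef]
    ext i j
    fin_cases i <;> fin_cases j <;> rfl
  have hQQ : Q * Qᵀ = 1 := by
    rw [hQt, hQdef, Matrix.mul_fin_three, Matrix.one_fin_three]
    norm_num
  have hQdet : IsUnit Q.det := by
    have h : Q.det = 1 := by
      rw [hQdef]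
      simp [Matrix.det_fin_three]
    rw [h]; exact isUnit_one
  have hQinv : Q⁻¹ = Qᵀ := inv_eq_right_inv hQQ
  set A₂ : Matrix (Fin 3) (Fin 3) ℝ := A₁ * Q with hA₂def
  have hA₂fact : A₂ * A₂ᵀ = M := by
    rw [hA₂def, transpose_mul, Matrix.mul_assoc, ← Matrix.mul_assoc Q Qᵀ A₁ᵀ, hQQ,
      Matrix.one_mul, hA₁fact]
  have hA₂det : IsUnit A₂.det := by
    rw [hA₂def, det_mul]
    exact hA₁det.mul hQdet
  have hA₂10 : A₂ 1 0 = 0 := by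
    rw [hA₂def, Matrix.mul_apply, Fin.sum_univ_three,
      show Q 0 0 = 1 from rfl, show Q 1 0 = 0 from rfl, show Q 2 0 = 0 from rfl, hA₁10]
    ring
  have hA₂20 : A₂ 2 0 = 0 := by
    rw [hA₂def, Matrix.mul_apply, Fin.sum_univ_three,
      show Q 0 0 = 1 from rfl, show Q 1 0 = 0 from rfl, show Q 2 0 = 0 from rfl, hA₁20]
    ring
  have hA₂inv10 : A₂⁻¹ 1 0 = 0 := by
    rw [hA₂def, Matrix.mul_inv_rev, hQinv, Matrix.mul_apply, Fin.sum_univ_three,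
      show Qᵀ 1 0 = 0 from rfl, show Qᵀ 1 1 = 0 from rfl, show Qᵀ 1 2 = 1 from rfl, hA₁inv20]
    ring
  have hSigdet : IsUnit Sig.det := isUnit_iff_ne_zero.mpr hSig.det_pos.ne'
  have hMinv : M⁻¹ = Sig := nonsing_inv_nonsing_inv Sig hSigdet
  refine ⟨A₁, A₂, hA₁det, hA₂det, hA₁10, hA₁20, ?_, hA₂10, hA₂20, ?_, ?_, ?_, ?_, ?_, ?_⟩
  · rw [transpose_apply]; exact hA₁inv10
  · rw [transpose_apply]; exact hA₂inv10
  · rw [hA₁fact]; exact hMinv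
  · rw [hA₂fact]; exact hMinv
  · intro d hd hEq
    have hQd : Q = diagonal d := by
      rw [hA₂def] at hEq
      have h2 := congrArg (fun X => A₁⁻¹ * X) hEq
      simpa [← Matrix.mul_assoc, Matrix.nonsing_inv_mul _ hA₁det] using h2
    have h12 := congrFun (congrFun hQd 1) 2
    rw [show Q 1 2 = -1 from rfl, diagonal_apply_ne _ (by decide : (1 : Fin 3) ≠ 2)] at h12
    norm_num at h12
  · exact Matrix.mul_nonsing_inv_cancel_right (A := A₁) B hA₁det
  · exact Matrix.mul_nonsing_inv_cancel_right (A := A₂) B hA₂det
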